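/- Let θ ∈ ℝ with sin θ ≠ 0 and set [m] := sin(mθ)/sin θ for m ∈ ℤ. Let u ∈ ℤ with [u] ≠ 0 and [u+1]·[u−1] ≥ 0. Then the real 2×2 matrix M := (1/[u]) · [[ [u+1], √([u+1][u−1]) ], [ √([u+1][u−1]), [u−1] ]] is symmetric and satisfies M·M = [2]·M. -/

import Mathlib

/-- Trigonometric quantum integer `[m] = sin(mθ)/sin θ`. -/
noncomputable def qit (θ : ℝ) (m : ℤ) : ℝ := Real.sin (m * θ) / Real.sin θ

lemma qit_sum (θ : ℝ) (hθ : Real.sin θ ≠ 0) (u : ℤ) :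
    qit θ (u + 1) + qit θ (u - 1) = qit θ 2 * qit θ u := by
  simp only [qit]
  push_cast
  rw [add_mul, sub_mul, one_mul, Real.sin_add, Real.sin_sub]
  field_simp
  rw [show (θ * 2) = θ + θ by ring, Real.sin_add]
  ring

/-- The 2×2 block U^a_{a+ε_i+ε_j} is symmetric and satisfies the Hecke
relation M·M = [2]·M. -/
theorem twoByTwo_hecke_block (θ : ℝ) (hθ : Real.sin θ ≠ 0) (u : ℤ)
    (hu : qit θ u ≠ 0) (hprod : 0 ≤ qit θ (u + 1) * qit θ (u - 1)) :
    ((1 / qit θ u) •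
        !![qit θ (u + 1), Real.sqrt (qit θ (u + 1) * qit θ (u - 1));
           Real.sqrt (qit θ (u + 1) * qit θ (u - 1)), qit θ (u - 1)]).IsSymm ∧
    ((1 / qit θ u) •
        !![qit θ (u + 1), Real.sqrt (qit θ (u + 1) * qit θ (u - 1));
           Real.sqrt (qit θ (u + 1) * qit θ (u - 1)), qit θ (u - 1)]) *
      ((1 / qit θ u) •
        !![qit θ (u + 1), Real.sqrt (qit θ (u + 1) * qit θ (u - 1));
           Real.sqrt (qit θ (u + 1) * qit θ (u - 1)), qit θ (u - 1)])
      = qit θ 2 •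
        ((1 / qit θ u) •
          !![qit θ (u + 1), Real.sqrt (qit θ (u + 1) * qit θ (u - 1));
             Real.sqrt (qit θ (u + 1) * qit θ (u - 1)), qit θ (u - 1)]) := by
  have hs : Real.sqrt (qit θ (u + 1) * qit θ (u - 1)) *
      Real.sqrt (qit θ (u + 1) * qit θ (u - 1)) = qit θ (u + 1) * qit θ (u - 1) :=
    Real.mul_self_sqrt hprod
  have hsum := qit_sum θ hθ u
  constructor
  · rw [Matrix.IsSymm]
    ext i j
    fin_cases i <;> fin_cases j <;>
      simp [Matrix.transpose_apply]
  · ext i j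
    fin_cases i <;> fin_cases j <;>
      · simp only [Matrix.smul_mul, Matrix.mul_smul, Matrix.smul_apply,
          Matrix.mul_apply, Fin.sum_univ_two, Matrix.cons_val', Matrix.cons_val_zero,
          Matrix.cons_val_one, Matrix.head_cons, Matrix.empty_val',
          Matrix.cons_val_fin_one, Matrix.head_fin_const, smul_eq_mul,
          Fin.zero_eta, Fin.mk_one, Matrix.of_apply]
        field_simp
        first
          | linear_combination (qit θ (u + 1)) * hsum + hs
          | linear_combination (Real.sqrt (qit θ (u + 1) * qit θ (u - 1))) * hsum
          | linear_combination (qit θ (u - 1)) * hsum + hs
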